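/- For any right congruence ρ on A^{-ω}: Λ'_ρ (the set of longest common suffixes lcs(x,y) over pairs (x,y) ∈ ρ with x ≠ y) is a right ideal of A*, and A*Λ'_ρ is a two-sided ideal of A* which equals A*Λ_ρ, where Λ_ρ is the set of longest common suffixes of nonsingular ρ-classes. -/
import Mathlib


/- Left infinite words over A are modelled as functions ℕ → A, where index 0 is
   the rightmost letter.  Appending a finite word on the right: -/

def lapp {A : Type*} (x : ℕ → A) (u : List A) : ℕ → A := fun n =>
  if h : n < u.length then u.reverse[n]'(by simpa using h) else x (n - u.length)

/-- u ∈ A* is a suffix of the left infinite word x -/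
def IsLSuffix {A : Type*} (u : List A) (x : ℕ → A) : Prop := ∃ y : ℕ → A, x = lapp y u

/-- right congruence on A^{-ω}: an equivalence relation compatible with the
  right action of A* (equivalently, with appending each letter) -/
def IsRightCongruence {A : Type*} (ρ : (ℕ → A) → (ℕ → A) → Prop) : Prop :=
  Equivalence ρ ∧ ∀ x y : ℕ → A, ∀ a : A, ρ x y → ρ (lapp x [a]) (lapp y [a])

section Graphs

variable {A Q : Type*}

/-- a left infinite path labelled x ending at q, in the A-graph with edge
  relation E (E p a q : there is an edge from p to q labelled a) -/
def HasLInfPath (E : Q → A → Q → Prop) (x : ℕ → A) (q : Q) : Prop :=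
  ∃ f : ℕ → Q, f 0 = q ∧ ∀ n : ℕ, E (f (n + 1)) (x n) (f n)

def OmegaDeterministic (E : Q → A → Q → Prop) : Prop :=
  ∀ x : ℕ → A, ∀ q q' : Q, HasLInfPath E x q → HasLInfPath E x q' → q = q'

def OmegaComplete (E : Q → A → Q → Prop) : Prop :=
  ∀ x : ℕ → A, ∃ q : Q, HasLInfPath E x q

def OmegaTrim (E : Q → A → Q → Prop) : Prop :=
  ∀ q : Q, ∃ x : ℕ → A, HasLInfPath E x q

/-- (-ω)-reset graph -/
def OmegaReset (E : Q → A → Q → Prop) : Prop :=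
  OmegaDeterministic E ∧ OmegaComplete E ∧ OmegaTrim E

/-- finite paths: HasPath E q u q' means u labels a path from q to q' -/
def HasPath (E : Q → A → Q → Prop) : Q → List A → Q → Prop
  | q, [], q' => q = q'
  | q, a :: u, q' => ∃ p : Q, E q a p ∧ HasPath E p u q'

end Graphs

/-- the setoid on A^{-ω} given by a right congruence -/
def caySetoid {A : Type*} {ρ : (ℕ → A) → (ℕ → A) → Prop} (hρ : IsRightCongruence ρ) :
    Setoid (ℕ → A) := ⟨ρ, hρ.1⟩

/-- the edge relation of the Cayley graph Cay(ρ): edges (uρ, a, (ua)ρ) -/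
def cayE {A : Type*} {ρ : (ℕ → A) → (ℕ → A) → Prop} (hρ : IsRightCongruence ρ) :
    Quotient (caySetoid hρ) → A → Quotient (caySetoid hρ) → Prop :=
  fun c a c' => ∃ u : ℕ → A, c = Quotient.mk (caySetoid hρ) u ∧
    c' = Quotient.mk (caySetoid hρ) (lapp u [a])

/-- Λ'_ρ: the longest common suffixes lcs(x,y) of pairs (x,y) ∈ ρ with x ≠ y -/
def LambdaP {A : Type*} (ρ : (ℕ → A) → (ℕ → A) → Prop) : Set (List A) :=
  {u | ∃ x y : ℕ → A, ρ x y ∧ x ≠ y ∧ IsLSuffix u x ∧ IsLSuffix u y ∧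
    ∀ v : List A, IsLSuffix v x → IsLSuffix v y → v <:+ u}

/-- Λ_ρ: the longest common suffixes of nonsingular ρ-classes -/
def Lambda {A : Type*} (ρ : (ℕ → A) → (ℕ → A) → Prop) : Set (List A) :=
  {u | ∃ x : ℕ → A, (∃ y : ℕ → A, ρ x y ∧ y ≠ x) ∧
    (∀ z : ℕ → A, ρ x z → IsLSuffix u z) ∧
    ∀ v : List A, (∀ z : ℕ → A, ρ x z → IsLSuffix v z) → v <:+ u}

/-- A*S: the words having a suffix in S -/
def leftIdealOf {A : Type*} (S : Set (List A)) : Set (List A) :=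
  {w | ∃ v : List A, ∃ s ∈ S, w = v ++ s}

/-- Res(ρ): the reset words of the Cayley graph Cay(ρ) -/
def ResSet {A : Type*} {ρ : (ℕ → A) → (ℕ → A) → Prop} (hρ : IsRightCongruence ρ) :
    Set (List A) :=
  {w | ∀ q q' r r' : Quotient (caySetoid hρ),
    HasPath (cayE hρ) q w q' → HasPath (cayE hρ) r w r' → q' = r'}

section Aux

variable {A : Type*}

lemma lapp_nil (x : ℕ → A) : lapp x [] = x := by
  funext n; simp [lapp]

lemma lapp_apply_add (x : ℕ → A) (u : List A) (n : ℕ) :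
    lapp x u (n + u.length) = x n := by
  simp [lapp]

lemma lapp_lapp (x : ℕ → A) (u v : List A) :
    lapp (lapp x u) v = lapp x (u ++ v) := by
  funext n
  simp only [lapp, List.reverse_append, List.length_append]
  by_cases h1 : n < v.length
  · rw [dif_pos h1, dif_pos (by omega)]
    rw [List.getElem_append_left (by simpa using h1)]
  · rw [dif_neg h1]
    by_cases h2 : n - v.length < u.length
    · rw [dif_pos h2, dif_pos (by omega)]
      rw [List.getElem_append_right (by simpa using h1)]
      congr 1
      simp
    · rw [dif_neg h2, dif_neg (by omega)]
      congr 1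
      omega

lemma lapp_cancel {x y : ℕ → A} {w : List A} (h : lapp x w = lapp y w) : x = y := by
  funext n
  have := congrFun h (n + w.length)
  simpa [lapp_apply_add] using this

/-- the reversed suffix of length m of x -/
def rsfx (x : ℕ → A) (m : ℕ) : List A := List.ofFn fun i : Fin m => x i

@[simp] lemma rsfx_length (x : ℕ → A) (m : ℕ) : (rsfx x m).length = m := by simp [rsfx]

lemma isLSuffix_iff {u : List A} {x : ℕ → A} :
    IsLSuffix u x ↔ u.reverse = rsfx x u.length := by
  constructor
  · rintro ⟨y, rfl⟩
    apply List.ext_getElem (by simp)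
    intro n h1 h2
    have hn : n < u.length := by simpa using h1
    have : (rsfx (lapp y u) u.length)[n]'h2 = lapp y u n := by simp [rsfx]
    rw [this]
    simp [lapp, hn]
  · intro h
    refine ⟨fun k => x (k + u.length), ?_⟩
    funext n
    by_cases hn : n < u.length
    · have h2 : n < u.reverse.length := by simpa using hn
      have h3 : u.reverse[n]'h2 = x n := by
        rw [List.getElem_of_eq h h2]; simp [rsfx]
      simp [lapp, hn, ← h3]
    · simp [lapp, hn, Nat.sub_add_cancel (le_of_not_gt hn)]

lemma rsfx_take (x : ℕ → A) {a b : ℕ} (h : a ≤ b) :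
    (rsfx x b).take a = rsfx x a := by
  apply List.ext_getElem (by simp [h])
  intro n h1 h2
  rw [List.getElem_take]
  simp [rsfx]

lemma suffix_of_le {u v : List A} {x : ℕ → A} (hu : IsLSuffix u x) (hv : IsLSuffix v x)
    (h : v.length ≤ u.length) : v <:+ u := by
  rw [isLSuffix_iff] at hu hv
  have hpre : v.reverse <+: u.reverse := by
    rw [hu, hv, ← rsfx_take x h]; exact List.take_prefix _ _
  rw [List.reverse_prefix] at hpre
  exact hpre

lemma common_suffix_eq {v : List A} {x z : ℕ → A} (hx : IsLSuffix v x) (hz : IsLSuffix v z)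
    {n : ℕ} (hn : n < v.length) : x n = z n := by
  rw [isLSuffix_iff] at hx hz
  have heq : rsfx x v.length = rsfx z v.length := hx.symm.trans hz
  have h2 : n < (rsfx x v.length).length := by simpa using hn
  have := List.getElem_of_eq heq h2
  simpa [rsfx] using this

lemma rho_lapp {ρ : (ℕ → A) → (ℕ → A) → Prop} (hρ : IsRightCongruence ρ) {x y : ℕ → A}
    (w : List A) (h : ρ x y) : ρ (lapp x w) (lapp y w) := by
  induction w generalizing x y with
  | nil => simpa [lapp_nil] using h
  | cons a w ih =>
    have h1 : ρ (lapp x [a]) (lapp y [a]) := hρ.2 x y a h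
    have h2 := ih h1
    simpa [lapp_lapp] using h2

lemma suffix_append_append {v u : List A} (w : List A) (h : v <:+ u) : v ++ w <:+ u ++ w := by
  obtain ⟨t, rfl⟩ := h
  exact ⟨t, by simp⟩

lemma lambdaP_right_ideal {ρ : (ℕ → A) → (ℕ → A) → Prop} (hρ : IsRightCongruence ρ) :
    ∀ u ∈ LambdaP ρ, ∀ w : List A, u ++ w ∈ LambdaP ρ := by
  intro u hu w
  obtain ⟨x, y, hxy, hne, hux, huy, hmax⟩ := hu
  refine ⟨lapp x w, lapp y w, rho_lapp hρ w hxy, fun h => hne (lapp_cancel h), ?_, ?_, ?_⟩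
  · obtain ⟨z, rfl⟩ := hux; exact ⟨z, lapp_lapp z u w⟩
  · obtain ⟨z, rfl⟩ := huy; exact ⟨z, lapp_lapp z u w⟩
  · intro v hvx hvy
    by_cases hlen : v.length ≤ w.length
    · exact (suffix_of_le ⟨x, rfl⟩ hvx hlen).trans (List.suffix_append u w)
    · have hwv : w <:+ v := suffix_of_le hvx ⟨x, rfl⟩ (le_of_not_ge hlen)
      obtain ⟨v', rfl⟩ := hwv
      have hx' : IsLSuffix v' x := by
        obtain ⟨z, hz⟩ := hvx
        rw [← lapp_lapp] at hz
        exact ⟨z, lapp_cancel hz⟩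
      have hy' : IsLSuffix v' y := by
        obtain ⟨z, hz⟩ := hvy
        rw [← lapp_lapp] at hz
        exact ⟨z, lapp_cancel hz⟩
      exact suffix_append_append w (hmax v' hx' hy')

lemma lambda_core {ρ : (ℕ → A) → (ℕ → A) → Prop} (hρ : IsRightCongruence ρ)
    {x y : ℕ → A} (hxy : ρ x y) (hne : y ≠ x) :
    ∃ s : List A, s ∈ LambdaP ρ ∧ s ∈ Lambda ρ ∧ (∀ z, ρ x z → IsLSuffix s z) ∧
      ∀ v : List A, (∀ z, ρ x z → IsLSuffix v z) → v <:+ s := by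
  classical
  have hy : ∃ n, x n ≠ y n := by
    by_contra h
    push_neg at h
    exact hne (funext fun n => (h n).symm)
  have hex : ∃ n, ∃ z, ρ x z ∧ x n ≠ z n ∧ ∀ i < n, x i = z i := by
    refine ⟨Nat.find hy, y, hxy, Nat.find_spec hy, fun i hi => ?_⟩
    by_contra h
    exact Nat.find_min hy hi h
  set N := Nat.find hex with hNdef
  obtain ⟨z₀, hz₀, hNne, -⟩ := Nat.find_spec hex
  set s : List A := (rsfx x N).reverse with hs
  have hslen : s.length = N := by simp [hs]
  have hagree : ∀ z, ρ x z → ∀ i < N, x i = z i := by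
    intro z hz i hi
    by_contra hne'
    have hzne : ∃ j, x j ≠ z j := ⟨i, hne'⟩
    have hm : ∃ zz, ρ x zz ∧ x (Nat.find hzne) ≠ zz (Nat.find hzne) ∧
        ∀ j < Nat.find hzne, x j = zz j := by
      refine ⟨z, hz, Nat.find_spec hzne, fun j hj => ?_⟩
      by_contra h
      exact Nat.find_min hzne hj h
    have hlt : Nat.find hzne < N := lt_of_le_of_lt (Nat.find_min' hzne hne') hi
    exact Nat.find_min hex hlt hm
  have hsall : ∀ z, ρ x z → IsLSuffix s z := by
    intro z hz
    rw [isLSuffix_iff]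
    have : s.reverse = rsfx x N := by simp [hs]
    rw [this, hslen]
    exact congrArg List.ofFn (funext fun i : Fin N => hagree z hz i i.isLt)
  have hz₀ne : z₀ ≠ x := fun h => hNne (by rw [h])
  have hbound : ∀ v : List A, IsLSuffix v x → IsLSuffix v z₀ → v.length ≤ N := by
    intro v hvx hvz
    by_contra h
    exact hNne (common_suffix_eq hvx hvz (lt_of_not_ge h))
  have hsx : IsLSuffix s x := hsall x (hρ.1.refl x)
  have hmaxsuff : ∀ v : List A, IsLSuffix v x → IsLSuffix v z₀ → v <:+ s := by
    intro v hvx hvz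
    exact suffix_of_le hsx hvx (by rw [hslen]; exact hbound v hvx hvz)
  exact ⟨s, ⟨x, z₀, hz₀, hz₀ne.symm, hsx, hsall z₀ hz₀, hmaxsuff⟩,
    ⟨x, ⟨z₀, hz₀, hz₀ne⟩, hsall, fun v hv => hmaxsuff v (hv x (hρ.1.refl x)) (hv z₀ hz₀)⟩,
    hsall, fun v hv => hmaxsuff v (hv x (hρ.1.refl x)) (hv z₀ hz₀)⟩

end Aux

/-- for a right congruence ρ on A^{-ω}: Λ'_ρ is a right ideal of
  A*, A*Λ'_ρ is a two-sided ideal of A*, and A*Λ'_ρ = A*Λ_ρ. -/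
theorem lambda_ideals {A : Type*} (ρ : (ℕ → A) → (ℕ → A) → Prop)
    (hρ : IsRightCongruence ρ) :
    (∀ u ∈ LambdaP ρ, ∀ w : List A, u ++ w ∈ LambdaP ρ) ∧
    (∀ u ∈ leftIdealOf (LambdaP ρ), ∀ v w : List A, v ++ u ++ w ∈ leftIdealOf (LambdaP ρ)) ∧
    leftIdealOf (LambdaP ρ) = leftIdealOf (Lambda ρ) := by
  have hP := lambdaP_right_ideal hρ
  refine ⟨hP, ?_, ?_⟩
  · rintro u ⟨t, s, hs, rfl⟩ v w
    exact ⟨v ++ t, s ++ w, hP s hs w, by simp⟩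
  · apply Set.Subset.antisymm
    · rintro u ⟨t, s, hs, rfl⟩
      obtain ⟨x, y, hxy, hne, -, -, hmax⟩ := hs
      obtain ⟨s', -, hs'Λ, hs'all, -⟩ := lambda_core hρ hxy hne.symm
      obtain ⟨t', rfl⟩ := hmax s' (hs'all x (hρ.1.refl x)) (hs'all y hxy)
      exact ⟨t ++ t', s', hs'Λ, by simp⟩
    · rintro u ⟨t, s, hs, rfl⟩
      obtain ⟨x, ⟨y, hxy, hne⟩, hall, hmax⟩ := hs
      obtain ⟨s', hs'P, -, hs'all, hs'max⟩ := lambda_core hρ hxy hne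
      have h1 : s' <:+ s := hmax s' hs'all
      have h2 : s <:+ s' := hs'max s hall
      have heq : s = s' := h2.sublist.antisymm h1.sublist
      exact ⟨t, s, by rwa [heq], rfl⟩
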